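/- Let c0, k, Y > 0 and let φ⁺(y) = ∫₀^∞ exp(-(c0 ξ² + 2 k Y ξ)) · (1 - exp(-2 c0 y ξ))/(2 c0 ξ) dξ. Then for all y > 0, φ⁺(y) ≤ (1/c0) · log((c0 y + k Y)/(k Y)). -/

import Mathlib

open MeasureTheory Real Set

/-- `∫₀^∞ e^{-aξ} dξ = 1/a` for `a > 0`. -/
lemma aux_exp_integral_Ioi {a : ℝ} (ha : 0 < a) :
    ∫ ξ in Ioi (0 : ℝ), Real.exp (-(a * ξ)) = 1 / a := by
  have h := integral_comp_mul_left_Ioi (fun x => Real.exp (-x)) 0 ha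
  simp only [mul_zero, smul_eq_mul] at h
  rw [h, integral_exp_neg_Ioi_zero]
  simp [one_div]

/-- `∫₀^y e^{cs} ds = (e^{cy} - 1)/c` for `c ≠ 0`. -/
lemma aux_exp_interval (c : ℝ) (hc : c ≠ 0) (y : ℝ) :
    ∫ s in (0 : ℝ)..y, Real.exp (c * s) = (Real.exp (c * y) - 1) / c := by
  have key : ∀ s ∈ Set.uIcc (0 : ℝ) y,
      HasDerivAt (fun s => Real.exp (c * s) / c) (Real.exp (c * s)) s := by
    intro s _
    have h1 : HasDerivAt (fun s : ℝ => c * s) c s := by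
      simpa using (hasDerivAt_id s).const_mul c
    have h2 := (h1.exp).div_const c
    refine h2.congr_deriv ?_
    field_simp
  have hint : IntervalIntegrable (fun s => Real.exp (c * s)) volume 0 y :=
    (Real.continuous_exp.comp (continuous_const.mul continuous_id)).intervalIntegrable 0 y
  rw [intervalIntegral.integral_eq_sub_of_hasDerivAt key hint]
  rw [mul_zero, Real.exp_zero]
  ring

theorem stmt2 (c0 k Y : ℝ) (hc0 : 0 < c0) (hk : 0 < k) (hY : 0 < Y) :
    ∀ y, 0 < y →
      (∫ ξ in Ioi (0 : ℝ),
        Real.exp (-(c0 * ξ ^ 2 + 2 * k * Y * ξ)) *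
          ((1 - Real.exp (-2 * c0 * y * ξ)) / (2 * c0 * ξ)))
      ≤ (1 / c0) * Real.log ((c0 * y + k * Y) / (k * Y)) := by
  intro y hy
  have hkY : 0 < k * Y := mul_pos hk hY
  -- The dominating kernel
  set G : ℝ × ℝ → ℝ := fun p => Real.exp (-(2 * (k * Y + c0 * p.2) * p.1)) with hGdef
  have hGcont : Continuous G := by
    apply Real.continuous_exp.comp
    fun_prop
  -- Integrability of G on (Ioi 0) ×ˢ (Ioc 0 y)
  have hGint : Integrable G ((volume.restrict (Ioi (0:ℝ))).prod (volume.restrict (Ioc (0:ℝ) y))) := by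
    have hdom : Integrable (fun p : ℝ × ℝ => Real.exp (-(2 * (k * Y)) * p.1) * 1)
        ((volume.restrict (Ioi (0:ℝ))).prod (volume.restrict (Ioc (0:ℝ) y))) := by
      exact (exp_neg_integrableOn_Ioi 0 (show (0:ℝ) < 2 * (k * Y) by positivity)).mul_prod
        (integrable_const 1)
    apply hdom.mono' (hGcont.aestronglyMeasurable)
    rw [Measure.prod_restrict]
    filter_upwards [ae_restrict_mem ((measurableSet_Ioi).prod measurableSet_Ioc)] with p hp
    obtain ⟨hp1, hp2⟩ := hp
    simp only [hGdef, mul_one, Real.norm_eq_abs, abs_of_pos (Real.exp_pos _)]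
    apply Real.exp_le_exp.mpr
    have h1 : (0:ℝ) < p.1 := hp1
    have h2 : (0:ℝ) < p.2 := hp2.1
    nlinarith [mul_pos (mul_pos hc0 h2) h1]
  -- Fubini
  have hswap :
      (∫ ξ in Ioi (0:ℝ), ∫ s in Ioc (0:ℝ) y, Real.exp (-(2 * (k * Y + c0 * s) * ξ)))
        = ∫ s in Ioc (0:ℝ) y, ∫ ξ in Ioi (0:ℝ), Real.exp (-(2 * (k * Y + c0 * s) * ξ)) :=
    integral_integral_swap hGint
  -- Compute the swapped integral
  have hinner : ∀ s ∈ Ioc (0:ℝ) y,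
      (∫ ξ in Ioi (0:ℝ), Real.exp (-(2 * (k * Y + c0 * s) * ξ)))
        = 1 / (2 * (k * Y + c0 * s)) := by
    intro s hs
    exact aux_exp_integral_Ioi (by nlinarith [hs.1])
  have hval : (∫ s in Ioc (0:ℝ) y, (1 : ℝ) / (2 * (k * Y + c0 * s)))
      = (1 / (2 * c0)) * Real.log ((c0 * y + k * Y) / (k * Y)) := by
    have hpos : ∀ s ∈ Set.uIcc (0:ℝ) y, 0 < k * Y + c0 * s := by
      intro s hs
      rw [Set.uIcc_of_le hy.le] at hs
      nlinarith [hs.1]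
    have key : ∀ s ∈ Set.uIcc (0:ℝ) y,
        HasDerivAt (fun s => (1 / (2 * c0)) * Real.log (k * Y + c0 * s))
          (1 / (2 * (k * Y + c0 * s))) s := by
      intro s hs
      have h1 : HasDerivAt (fun s : ℝ => k * Y + c0 * s) c0 s := by
        simpa using ((hasDerivAt_id s).const_mul c0).const_add (k * Y)
      have h2 := (h1.log (hpos s hs).ne').const_mul (1 / (2 * c0))
      refine h2.congr_deriv ?_
      have h3 : k * Y + c0 * s ≠ 0 := (hpos s hs).ne'
      field_simp
    have hint : IntervalIntegrable (fun s => (1:ℝ) / (2 * (k * Y + c0 * s))) volume 0 y := by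
      apply ContinuousOn.intervalIntegrable
      apply ContinuousOn.div continuousOn_const
      · fun_prop
      · intro s hs
        have := hpos s hs
        positivity
    have := intervalIntegral.integral_eq_sub_of_hasDerivAt key hint
    rw [intervalIntegral.integral_of_le hy.le] at this
    rw [this, mul_zero, add_zero]
    rw [Real.log_div (by positivity) (by positivity)]
    ring_nf
  -- The pointwise domination of the original integrand
  have hmono :
      (∫ ξ in Ioi (0 : ℝ),
        Real.exp (-(c0 * ξ ^ 2 + 2 * k * Y * ξ)) *
          ((1 - Real.exp (-2 * c0 * y * ξ)) / (2 * c0 * ξ)))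
      ≤ ∫ ξ in Ioi (0:ℝ), ∫ s in Ioc (0:ℝ) y, Real.exp (-(2 * (k * Y + c0 * s) * ξ)) := by
    apply integral_mono_of_nonneg
    · filter_upwards [ae_restrict_mem measurableSet_Ioi] with ξ hξ
      have hξ0 : (0:ℝ) < ξ := hξ
      have h1 : Real.exp (-2 * c0 * y * ξ) ≤ 1 := by
        rw [← Real.exp_zero]
        apply Real.exp_le_exp.mpr
        nlinarith [mul_pos (mul_pos hc0 hy) hξ0]
      have h2 : (0:ℝ) < 2 * c0 * ξ := by positivity
      have h3 : (0:ℝ) ≤ 1 - Real.exp (-2 * c0 * y * ξ) := by linarith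
      positivity
    · exact hGint.integral_prod_left
    · filter_upwards [ae_restrict_mem measurableSet_Ioi] with ξ hξ
      have hξ0 : (0:ℝ) < ξ := hξ
      -- First: the original integrand equals an inner integral
      have heq : Real.exp (-(c0 * ξ ^ 2 + 2 * k * Y * ξ)) *
          ((1 - Real.exp (-2 * c0 * y * ξ)) / (2 * c0 * ξ))
          = ∫ s in Ioc (0:ℝ) y,
              Real.exp (-(c0 * ξ ^ 2 + 2 * k * Y * ξ)) * Real.exp ((-2 * c0 * ξ) * s) := by
        rw [integral_const_mul, ← intervalIntegral.integral_of_le hy.le,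
          aux_exp_interval (-2 * c0 * ξ) (by nlinarith) y]
        have : (-2 * c0 * ξ) * y = -2 * c0 * y * ξ := by ring
        rw [this]
        field_simp
        ring
      rw [heq]
      apply setIntegral_mono_on
      · apply Continuous.integrableOn_Ioc
        apply Continuous.mul continuous_const
        apply Real.continuous_exp.comp
        fun_prop
      · apply Continuous.integrableOn_Ioc
        apply Real.continuous_exp.comp
        fun_prop
      · exact measurableSet_Ioc
      · intro s hs
        rw [← Real.exp_add]
        apply Real.exp_le_exp.mpr
        have hs0 : (0:ℝ) < s := hs.1
        nlinarith [sq_nonneg ξ, mul_pos hc0 (mul_pos hs0 hξ0)]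
  -- Put it together
  calc (∫ ξ in Ioi (0 : ℝ),
        Real.exp (-(c0 * ξ ^ 2 + 2 * k * Y * ξ)) *
          ((1 - Real.exp (-2 * c0 * y * ξ)) / (2 * c0 * ξ)))
      ≤ ∫ ξ in Ioi (0:ℝ), ∫ s in Ioc (0:ℝ) y, Real.exp (-(2 * (k * Y + c0 * s) * ξ)) := hmono
    _ = ∫ s in Ioc (0:ℝ) y, ∫ ξ in Ioi (0:ℝ), Real.exp (-(2 * (k * Y + c0 * s) * ξ)) := hswap
    _ = ∫ s in Ioc (0:ℝ) y, (1:ℝ) / (2 * (k * Y + c0 * s)) :=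
        setIntegral_congr_fun measurableSet_Ioc hinner
    _ = (1 / (2 * c0)) * Real.log ((c0 * y + k * Y) / (k * Y)) := hval
    _ ≤ (1 / c0) * Real.log ((c0 * y + k * Y) / (k * Y)) := by
        have hlog : 0 ≤ Real.log ((c0 * y + k * Y) / (k * Y)) := by
          apply Real.log_nonneg
          rw [le_div_iff₀ hkY]
          nlinarith
        have : (1 : ℝ) / (2 * c0) ≤ 1 / c0 := by
          apply div_le_div_of_nonneg_left one_pos.le hc0
          linarith
        exact mul_le_mul_of_nonneg_right this hlog
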